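/- arXiv:2103.14353 — 2 statements merged into one kernel-verified Lean document; each statement's English description precedes it below -/
import Mathlib

section
/- Let n ∈ ℕ, n ≥ 1, and h̄ ∈ ℕ, h̄ ≥ 1. The infimum of the set of all γ ≥ 0 such that, for every sampling sequence t : ℕ → ℕ with sampling intervals h_k ≤ h̄, every signal y : ℕ → ℝ^n, and every T ∈ ℕ, Σ_{s=0}^{T} ‖(Δy)(s)‖² ≤ γ² · Σ_{s=0}^{T} ‖y(s)‖², equals sqrt( λmax(E_{h̄}) ). (The ℓ2 gain of the delay operator over all sampling patterns with intervals at most h̄ is exactly sqrt(λmax(E_{h̄})).) -/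
open Matrix Finset

/-- The `h × h` matrix with entries `min i j` (zero-based indices). -/
noncomputable def Emat (h : ℕ) : Matrix (Fin h) (Fin h) ℝ :=
  fun i j => (min (i : ℕ) (j : ℕ) : ℝ)

lemma Emat_isHermitian (h : ℕ) : (Emat h).IsHermitian := by
  ext i j
  simp [Emat, Matrix.conjTranspose_apply, min_comm]

/-- The largest eigenvalue of `Emat h`. -/
noncomputable def lamMax (h : ℕ) : ℝ := ⨆ i, (Emat_isHermitian h).eigenvalues i

section Rayleigh
variable (h : ℕ)

lemma inner_eq_dot (v w : EuclideanSpace ℝ (Fin h)) :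
    (inner ℝ v w : ℝ) = dotProduct v w := by
  simp [PiLp.inner_apply, dotProduct, RCLike.inner_apply, mul_comm]

lemma repr_mulVec (x : EuclideanSpace ℝ (Fin h)) (i : Fin h) :
    (Emat_isHermitian h).eigenvectorBasis.repr (WithLp.toLp 2 ((Emat h) *ᵥ x)) i
      = (Emat_isHermitian h).eigenvalues i * (Emat_isHermitian h).eigenvectorBasis.repr x i := by
  set hA := Emat_isHermitian h with hhA
  rw [OrthonormalBasis.repr_apply_apply, OrthonormalBasis.repr_apply_apply]
  have hsymm : (Emat h)ᵀ = Emat h := by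
    have := hA; rwa [Matrix.IsHermitian, Matrix.conjTranspose_eq_transpose_of_trivial] at this
  have hmv : Emat h *ᵥ (hA.eigenvectorBasis i : Fin h → ℝ)
      = hA.eigenvalues i • (hA.eigenvectorBasis i : Fin h → ℝ) := hA.mulVec_eigenvectorBasis i
  rw [inner_eq_dot, inner_eq_dot, WithLp.ofLp_toLp, dotProduct_mulVec, ← Matrix.mulVec_transpose, hsymm,
    hmv, smul_dotProduct]
  rfl

lemma dot_eq_sum_repr (x y : EuclideanSpace ℝ (Fin h)) :
    dotProduct (x : Fin h → ℝ) y
      = ∑ i, (Emat_isHermitian h).eigenvectorBasis.repr x i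
          * (Emat_isHermitian h).eigenvectorBasis.repr y i := by
  rw [← inner_eq_dot, ← (Emat_isHermitian h).eigenvectorBasis.repr.inner_map_map x y,
    PiLp.inner_apply]
  simp only [RCLike.inner_apply, starRingEnd_apply, star_trivial]
  exact Finset.sum_congr rfl fun _ _ => mul_comm _ _

lemma rayleigh_le (hh : 1 ≤ h) (x : EuclideanSpace ℝ (Fin h)) :
    dotProduct (x : Fin h → ℝ) ((Emat h) *ᵥ x) ≤ lamMax h * ∑ a, (x a) ^ 2 := by
  have : Nonempty (Fin h) := ⟨⟨0, hh⟩⟩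
  have key : dotProduct (x : Fin h → ℝ) ((Emat h) *ᵥ x)
      = ∑ i, (Emat_isHermitian h).eigenvalues i
          * ((Emat_isHermitian h).eigenvectorBasis.repr x i) ^ 2 := by
    rw [show (Emat h *ᵥ (x : Fin h → ℝ)) = (WithLp.toLp 2 (Emat h *ᵥ (x : Fin h → ℝ))).ofLp
      from rfl, dot_eq_sum_repr]
    refine Finset.sum_congr rfl fun i _ => ?_
    rw [repr_mulVec]; ring
  rw [key]
  have hx2 : ∑ a, (x a) ^ 2 = ∑ i, ((Emat_isHermitian h).eigenvectorBasis.repr x i) ^ 2 := by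
    have := dot_eq_sum_repr h x x
    simpa [dotProduct, sq] using this
  rw [hx2, Finset.mul_sum]
  refine Finset.sum_le_sum fun i _ => ?_
  have hle : (Emat_isHermitian h).eigenvalues i ≤ lamMax h :=
    le_ciSup (Set.Finite.bddAbove (Set.finite_range _)) i
  exact mul_le_mul_of_nonneg_right hle (sq_nonneg _)

lemma exists_rayleigh_eq (hh : 1 ≤ h) :
    ∃ x : EuclideanSpace ℝ (Fin h), (∑ a, (x a) ^ 2 = 1) ∧
      dotProduct (x : Fin h → ℝ) ((Emat h) *ᵥ x) = lamMax h := by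
  have : Nonempty (Fin h) := ⟨⟨0, hh⟩⟩
  obtain ⟨i₀, hi₀⟩ := exists_eq_ciSup_of_finite (f := (Emat_isHermitian h).eigenvalues)
  set hA := Emat_isHermitian h
  have hnorm : ‖hA.eigenvectorBasis i₀‖ = 1 := hA.eigenvectorBasis.orthonormal.1 i₀
  have h2 : dotProduct (hA.eigenvectorBasis i₀ : Fin h → ℝ)
      (hA.eigenvectorBasis i₀ : Fin h → ℝ) = 1 := by
    have := inner_eq_dot h (hA.eigenvectorBasis i₀) (hA.eigenvectorBasis i₀)
    rw [real_inner_self_eq_norm_sq, hnorm] at this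
    simpa using this.symm
  refine ⟨hA.eigenvectorBasis i₀, ?_, ?_⟩
  · simpa [dotProduct, sq] using h2
  · have hmv : Emat h *ᵥ (hA.eigenvectorBasis i₀ : Fin h → ℝ)
        = hA.eigenvalues i₀ • (hA.eigenvectorBasis i₀ : Fin h → ℝ) := hA.mulVec_eigenvectorBasis i₀
    rw [hmv, dotProduct_smul, smul_eq_mul, h2, mul_one, hi₀]
    rfl

end Rayleigh

section QuadForm

lemma quad_form (h : ℕ) (x : ℕ → ℝ) :
    dotProduct (fun a : Fin h => x a) ((Emat h) *ᵥ (fun a : Fin h => x a))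
      = ∑ j ∈ range h, (∑ a ∈ Ico (j + 1) h, x a) ^ 2 := by
  have hmin : ∀ a b : ℕ, a < h → ((min a b : ℕ) : ℝ)
      = ∑ j ∈ range h, (if j < a then (1:ℝ) else 0) * (if j < b then (1:ℝ) else 0) := by
    intro a b ha
    have he : ∀ j : ℕ, (if j < a then (1:ℝ) else 0) * (if j < b then (1:ℝ) else 0)
        = if j < min a b then (1:ℝ) else 0 := by
      intro j; by_cases h1 : j < a <;> by_cases h2 : j < b <;> simp [h1, h2, lt_min_iff, *]
    simp_rw [he]
    rw [Finset.sum_boole]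
    have hfil : (range h).filter (fun j => j < min a b) = range (min a b) := by
      ext j; simp only [mem_filter, mem_range]; omega
    rw [hfil, Finset.card_range]
  have step1 : ∀ i : Fin h, ((Emat h) *ᵥ (fun a : Fin h => x a)) i
      = ∑ b ∈ range h, ((min (i : ℕ) b : ℕ) : ℝ) * x b := by
    intro i
    have : ∀ b : Fin h, Emat h i b * x b = ((min (i:ℕ) (b:ℕ) : ℕ) : ℝ) * x b := by
      intro b; simp [Emat]
    simp only [Matrix.mulVec, dotProduct]
    rw [Finset.sum_congr rfl (fun b _ => this b)]
    exact Fin.sum_univ_eq_sum_range (fun b => ((min (i : ℕ) b : ℕ) : ℝ) * x b) h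
  have step2 : dotProduct (fun a : Fin h => x a) ((Emat h) *ᵥ (fun a : Fin h => x a))
      = ∑ a ∈ range h, x a * ∑ b ∈ range h, ((min a b : ℕ) : ℝ) * x b := by
    rw [dotProduct]
    rw [Finset.sum_congr rfl (fun i (_ : i ∈ univ) => by rw [step1 i])]
    exact Fin.sum_univ_eq_sum_range (fun a => x a * ∑ b ∈ range h, ((min a b : ℕ) : ℝ) * x b) h
  rw [step2]
  have hIco : ∀ j : ℕ, ∑ a ∈ range h, (if j < a then x a else 0) = ∑ a ∈ Ico (j + 1) h, x a := by
    intro j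
    rw [← Finset.sum_filter]
    congr 1
    ext a; simp only [mem_filter, mem_range, mem_Ico]; omega
  calc ∑ a ∈ range h, x a * ∑ b ∈ range h, ((min a b : ℕ) : ℝ) * x b
      = ∑ a ∈ range h, ∑ j ∈ range h, ∑ b ∈ range h,
          ((if j < a then x a else 0) * (if j < b then x b else 0)) := by
        refine Finset.sum_congr rfl fun a ha => ?_
        rw [Finset.mul_sum, Finset.sum_comm]
        refine Finset.sum_congr rfl fun b hb => ?_
        rw [hmin a b (mem_range.mp ha), Finset.sum_mul, Finset.mul_sum]
        refine Finset.sum_congr rfl fun j hj => ?_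
        by_cases h1 : j < a <;> by_cases h2 : j < b <;> simp [h1, h2]
    _ = ∑ j ∈ range h, ∑ a ∈ range h, ∑ b ∈ range h,
          ((if j < a then x a else 0) * (if j < b then x b else 0)) := Finset.sum_comm
    _ = ∑ j ∈ range h, (∑ a ∈ Ico (j + 1) h, x a) ^ 2 := by
        refine Finset.sum_congr rfl fun j _ => ?_
        rw [← Finset.sum_mul_sum, hIco j, sq]

lemma inner_reflect (d j h : ℕ) (hd : d ≤ h) (w : ℕ → ℝ) :
    ∑ a ∈ Ico (j + 1) h, (if a < d then w (d - 1 - a) else 0)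
      = ∑ i ∈ range (d - 1 - j), w i := by
  rw [show (∑ a ∈ Ico (j + 1) h, (if a < d then w (d - 1 - a) else 0))
      = ∑ a ∈ (Ico (j + 1) h).filter (fun a => a < d), w (d - 1 - a) from
    (Finset.sum_filter _ _).symm]
  have hfil : (Ico (j + 1) h).filter (fun a => a < d) = Ico (j + 1) d := by
    ext a; simp only [mem_filter, mem_Ico]; omega
  rw [hfil, Finset.sum_Ico_eq_sum_range]
  have : ∀ i ∈ range (d - (j + 1)), w (d - 1 - (j + 1 + i)) = w ((d - 1 - j) - 1 - i) := by
    intro i hi; congr 1; omega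
  rw [Finset.sum_congr rfl this, show d - (j + 1) = d - 1 - j by omega,
    Finset.sum_range_reflect]

lemma block_id (h d : ℕ) (hd : d ≤ h) (w : ℕ → ℝ) :
    dotProduct (fun a : Fin h => if (a:ℕ) < d then w (d - 1 - (a:ℕ)) else 0)
        ((Emat h) *ᵥ (fun a : Fin h => if (a:ℕ) < d then w (d - 1 - (a:ℕ)) else 0))
      = ∑ j ∈ range d, (∑ i ∈ range j, w i) ^ 2 := by
  rw [quad_form h (fun a => if a < d then w (d - 1 - a) else 0)]
  have h1 : ∀ j ∈ range h, (∑ a ∈ Ico (j + 1) h, (if a < d then w (d - 1 - a) else 0)) ^ 2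
      = (∑ i ∈ range (d - 1 - j), w i) ^ 2 := by
    intro j _; rw [inner_reflect d j h hd]
  rw [Finset.sum_congr rfl h1]
  rw [← Finset.sum_subset (Finset.range_subset_range.mpr hd)
    (fun j _ hj => by
      have : d - 1 - j = 0 := by simp only [mem_range, not_lt] at hj ⊢; omega
      rw [this]; simp)]
  have := Finset.sum_range_reflect (fun j => (∑ i ∈ range j, w i) ^ 2) d
  simpa using this

lemma block_id_norm (h d : ℕ) (hd : d ≤ h) (w : ℕ → ℝ) :
    ∑ a ∈ range h, (if a < d then w (d - 1 - a) else 0) ^ 2 = ∑ j ∈ range d, (w j) ^ 2 := by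
  rw [← Finset.sum_subset (Finset.range_subset_range.mpr hd)
    (fun a _ ha => by simp only [mem_range, not_lt] at ha; simp [Nat.not_lt.mpr ha])]
  have h1 : ∀ a ∈ range d, (if a < d then w (d - 1 - a) else 0) ^ 2 = (w (d - 1 - a)) ^ 2 := by
    intro a ha; rw [if_pos (mem_range.mp ha)]
  rw [Finset.sum_congr rfl h1]
  exact Finset.sum_range_reflect (fun a => (w a) ^ 2) d

/-- The scalar one-block inequality. -/
lemma scalar_block_le (h : ℕ) (hh : 1 ≤ h) (d : ℕ) (hd : d ≤ h) (w : ℕ → ℝ) :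
    ∑ j ∈ range d, (∑ i ∈ range j, w i) ^ 2 ≤ lamMax h * ∑ j ∈ range d, (w j) ^ 2 := by
  set x : ℕ → ℝ := fun a => if a < d then w (d - 1 - a) else 0 with hx
  have h1 := block_id h d hd w
  have h2 := rayleigh_le h hh (WithLp.toLp 2 (fun a : Fin h => x a))
  have h3 : ∑ a : Fin h, (x (a : ℕ)) ^ 2 = ∑ a ∈ range h, (x a) ^ 2 :=
    Fin.sum_univ_eq_sum_range (fun a => (x a) ^ 2) h
  have h4 := block_id_norm h d hd w
  calc ∑ j ∈ range d, (∑ i ∈ range j, w i) ^ 2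
      = dotProduct (fun a : Fin h => x a) ((Emat h) *ᵥ (fun a : Fin h => x a)) := h1.symm
    _ ≤ lamMax h * ∑ a : Fin h, (x (a : ℕ)) ^ 2 := h2
    _ = lamMax h * ∑ j ∈ range d, (w j) ^ 2 := by rw [h3, h4]

/-- The scalar one-block equality witness. -/
lemma scalar_block_eq (h : ℕ) (hh : 1 ≤ h) :
    ∃ w : ℕ → ℝ, ∑ j ∈ range h, (w j) ^ 2 = 1 ∧
      ∑ j ∈ range h, (∑ i ∈ range j, w i) ^ 2 = lamMax h := by
  obtain ⟨x₀, hx1, hx2⟩ := exists_rayleigh_eq h hh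
  set x' : ℕ → ℝ := fun a => if ha : a < h then x₀ ⟨a, ha⟩ else 0 with hx'
  set w : ℕ → ℝ := fun i => x' (h - 1 - i) with hw
  have hx'a : ∀ (a : ℕ) (ha : a < h), x' a = x₀ ⟨a, ha⟩ := fun a ha => dif_pos ha
  have hwa : ∀ (a : ℕ) (ha : a < h), w (h - 1 - a) = x₀ ⟨a, ha⟩ := by
    intro a ha
    have hb : h - 1 - (h - 1 - a) = a := by omega
    simp only [hw]
    rw [hb, hx'a a ha]
  have hfun : (fun a : Fin h => if (a:ℕ) < h then w (h - 1 - (a:ℕ)) else 0)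
      = fun a : Fin h => x₀ a := by
    funext a
    rw [if_pos a.isLt, hwa (a : ℕ) a.isLt]
  refine ⟨w, ?_, ?_⟩
  · calc ∑ j ∈ range h, w j ^ 2
        = ∑ j ∈ range h, w (h - 1 - j) ^ 2 :=
          (Finset.sum_range_reflect (fun j => w j ^ 2) h).symm
      _ = ∑ j ∈ range h, (x' j) ^ 2 := Finset.sum_congr rfl (fun j hj => by
            rw [hwa j (mem_range.mp hj), hx'a j (mem_range.mp hj)])
      _ = ∑ a : Fin h, (x₀ a) ^ 2 := by
            rw [← Fin.sum_univ_eq_sum_range (fun j => (x' j) ^ 2) h]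
            exact Finset.sum_congr rfl fun a _ => by rw [hx'a (a : ℕ) a.isLt]
      _ = 1 := hx1
  · have h1 := block_id h h le_rfl w
    rw [hfun] at h1
    rw [← h1]
    exact hx2

lemma lamMax_nonneg (h : ℕ) (hh : 1 ≤ h) : 0 ≤ lamMax h := by
  obtain ⟨w, hw1, hw2⟩ := scalar_block_eq h hh
  rw [← hw2]
  exact Finset.sum_nonneg fun j _ => sq_nonneg _

end QuadForm

section VectorBlock

lemma norm_sq_eq_sum (n : ℕ) (v : EuclideanSpace ℝ (Fin n)) :
    ‖v‖ ^ 2 = ∑ c, (v c) ^ 2 := by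
  rw [← real_inner_self_eq_norm_sq, PiLp.inner_apply]
  simp [RCLike.inner_apply, sq]

lemma vector_block_le (n h : ℕ) (hh : 1 ≤ h) (d : ℕ) (hd : d ≤ h)
    (z : ℕ → EuclideanSpace ℝ (Fin n)) :
    ∑ j ∈ range d, ‖∑ i ∈ range j, z i‖ ^ 2 ≤ lamMax h * ∑ j ∈ range d, ‖z j‖ ^ 2 := by
  have happ : ∀ (s : Finset ℕ) (c : Fin n), (∑ i ∈ s, z i) c = ∑ i ∈ s, z i c := by
    intro s c
    rw [WithLp.ofLp_sum, Finset.sum_apply]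
  calc ∑ j ∈ range d, ‖∑ i ∈ range j, z i‖ ^ 2
      = ∑ j ∈ range d, ∑ c, (∑ i ∈ range j, z i c) ^ 2 := by
        refine Finset.sum_congr rfl fun j _ => ?_
        rw [norm_sq_eq_sum]
        exact Finset.sum_congr rfl fun c _ => by rw [happ]
    _ = ∑ c, ∑ j ∈ range d, (∑ i ∈ range j, z i c) ^ 2 := Finset.sum_comm
    _ ≤ ∑ c, lamMax h * ∑ j ∈ range d, (z j c) ^ 2 := by
        refine Finset.sum_le_sum fun c _ => ?_
        exact scalar_block_le h hh d hd (fun i => z i c)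
    _ = lamMax h * ∑ j ∈ range d, ‖z j‖ ^ 2 := by
        rw [← Finset.mul_sum, Finset.sum_comm]
        congr 1
        exact Finset.sum_congr rfl fun j _ => (norm_sq_eq_sum n (z j)).symm

end VectorBlock

section Partition

lemma sum_blocks (u : ℕ → ℕ) (hu : Monotone u) (f : ℕ → ℝ) (K : ℕ) :
    ∑ k ∈ range K, ∑ s ∈ Ico (u k) (u (k + 1)), f s = ∑ s ∈ Ico (u 0) (u K), f s := by
  induction K with
  | zero => simp
  | succ K ih =>
      rw [Finset.sum_range_succ, ih,
        Finset.sum_Ico_consecutive f (hu (Nat.zero_le K)) (hu (Nat.le_succ K))]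

end Partition

/-- The ℓ₂ gain of the delay operator over all sampling patterns with intervals at most
`h̄` is exactly `sqrt(λmax(E_h̄))`: the infimum of all `γ ≥ 0` such that the truncated
energy bound `∑‖(Δy)(s)‖² ≤ γ² ∑‖y(s)‖²` holds for every sampling sequence, every
signal, and every horizon equals `sqrt(λmax(E_h̄))`. -/
theorem delay_operator_l2_gain_exact (n : ℕ) (hn : 1 ≤ n) (hbar : ℕ) (hhbar : 1 ≤ hbar) :
    sInf {γ : ℝ | 0 ≤ γ ∧
      ∀ t : ℕ → ℕ, StrictMono t → t 0 = 0 → (∀ k : ℕ, t (k + 1) - t k ≤ hbar) →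
        ∀ y e : ℕ → EuclideanSpace ℝ (Fin n),
          (∀ k s : ℕ, t k ≤ s → s < t (k + 1) →
            e s = ∑ i ∈ Finset.Ico (t k) s, y i) →
          ∀ T : ℕ, ∑ s ∈ Finset.range (T + 1), ‖e s‖ ^ 2
            ≤ γ ^ 2 * ∑ s ∈ Finset.range (T + 1), ‖y s‖ ^ 2}
      = Real.sqrt (lamMax hbar) := by
  have hlam0 : 0 ≤ lamMax hbar := lamMax_nonneg hbar hhbar
  set S : Set ℝ := {γ : ℝ | 0 ≤ γ ∧
      ∀ t : ℕ → ℕ, StrictMono t → t 0 = 0 → (∀ k : ℕ, t (k + 1) - t k ≤ hbar) →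
        ∀ y e : ℕ → EuclideanSpace ℝ (Fin n),
          (∀ k s : ℕ, t k ≤ s → s < t (k + 1) →
            e s = ∑ i ∈ Finset.Ico (t k) s, y i) →
          ∀ T : ℕ, ∑ s ∈ Finset.range (T + 1), ‖e s‖ ^ 2
            ≤ γ ^ 2 * ∑ s ∈ Finset.range (T + 1), ‖y s‖ ^ 2} with hS
  have hmem : Real.sqrt (lamMax hbar) ∈ S := by
    refine ⟨Real.sqrt_nonneg _, ?_⟩
    intro t ht ht0 hgap y e he T
    rw [Real.sq_sqrt hlam0]
    set u : ℕ → ℕ := fun k => min (t k) (T + 1) with hu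
    have hval : ∀ j, u j = min (t j) (T + 1) := fun j => rfl
    have humono : Monotone u := fun a b hab => min_le_min (ht.monotone hab) le_rfl
    have hu0 : u 0 = 0 := by rw [hval, ht0]; simp
    have huK : u (T + 1) = T + 1 := by
      rw [hval]
      exact min_eq_right (ht.le_apply)
    have hrange : ∀ g : ℕ → ℝ, ∑ s ∈ range (T + 1), g s
        = ∑ k ∈ range (T + 1), ∑ s ∈ Ico (u k) (u (k + 1)), g s := by
      intro g
      rw [sum_blocks u humono g (T + 1), hu0, huK]
      rw [Finset.range_eq_Ico]
    rw [hrange (fun s => ‖e s‖ ^ 2), hrange (fun s => ‖y s‖ ^ 2), Finset.mul_sum]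
    refine Finset.sum_le_sum fun k _ => ?_
    -- per-block bound
    rcases le_or_gt (u (k + 1)) (u k) with hle | hlt
    · rw [Finset.Ico_eq_empty (by omega : ¬ u k < u (k + 1))]
      simp
    · have htk : t k ≤ T := by
        by_contra hc
        push_neg at hc
        rw [hval k, hval (k + 1)] at hlt
        omega
      have huk : u k = t k := by rw [hval k]; omega
      set m := u (k + 1) with hm
      have hmle : m ≤ t (k + 1) := by rw [hm, hval (k + 1)]; exact min_le_left _ _
      set d := m - t k with hd
      have hdle : d ≤ hbar := by
        have h1 := hgap k
        have h2 : t k < t (k + 1) := ht (Nat.lt_succ_self k)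
        omega
      have hblocke : ∑ s ∈ Ico (u k) (u (k + 1)), ‖e s‖ ^ 2
          = ∑ j ∈ range d, ‖∑ i ∈ range j, y (t k + i)‖ ^ 2 := by
        rw [huk, ← hm, Finset.sum_Ico_eq_sum_range, ← hd]
        refine Finset.sum_congr rfl fun j hj => ?_
        have hj' : j < d := mem_range.mp hj
        have hcond1 : t k ≤ t k + j := Nat.le_add_right _ _
        have hcond2 : t k + j < t (k + 1) := by omega
        rw [he k (t k + j) hcond1 hcond2, Finset.sum_Ico_eq_sum_range]
        simp
      have hblocky : ∑ s ∈ Ico (u k) (u (k + 1)), ‖y s‖ ^ 2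
          = ∑ j ∈ range d, ‖y (t k + j)‖ ^ 2 := by
        rw [huk, ← hm, Finset.sum_Ico_eq_sum_range, ← hd]
      rw [hblocke, hblocky]
      exact vector_block_le n hbar hhbar d hdle (fun i => y (t k + i))
  have hlb : ∀ γ ∈ S, Real.sqrt (lamMax hbar) ≤ γ := by
    rintro γ ⟨hγ0, hγ⟩
    obtain ⟨w, hw1, hw2⟩ := scalar_block_eq hbar hhbar
    set u₀ : EuclideanSpace ℝ (Fin n) := EuclideanSpace.single ⟨0, hn⟩ (1 : ℝ) with hu₀
    have hnorm₀ : ‖u₀‖ = 1 := by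
      rw [hu₀, EuclideanSpace.norm_single]
      norm_num
    set t : ℕ → ℕ := fun k => k * hbar with htdef
    have ht : StrictMono t := by
      intro a b hab
      simp only [htdef]
      exact Nat.mul_lt_mul_of_lt_of_le hab (le_refl hbar) (by omega)
    set y : ℕ → EuclideanSpace ℝ (Fin n) := fun s => w s • u₀ with hy
    set e : ℕ → EuclideanSpace ℝ (Fin n) :=
      fun s => (∑ i ∈ Ico ((s / hbar) * hbar) s, w i) • u₀ with he
    have hecond : ∀ k s : ℕ, t k ≤ s → s < t (k + 1) →
        e s = ∑ i ∈ Finset.Ico (t k) s, y i := by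
      intro k s h1 h2
      have hdiv : s / hbar = k := by
        apply Nat.div_eq_of_lt_le
        · simpa [htdef, Nat.mul_comm] using h1
        · simpa [htdef, Nat.mul_comm, Nat.succ_mul, Nat.mul_succ] using h2
      simp only [he, hy, hdiv, htdef]
      rw [← Finset.sum_smul]
    have hmain := hγ t ht (by simp [htdef]) (fun k => by simp [htdef, Nat.succ_mul]) y e hecond
      (hbar - 1)
    have hT1 : hbar - 1 + 1 = hbar := by omega
    rw [hT1] at hmain
    have hesum : ∑ s ∈ range hbar, ‖e s‖ ^ 2 = lamMax hbar := by
      rw [← hw2]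
      refine Finset.sum_congr rfl fun s hs => ?_
      have hs' : s < hbar := mem_range.mp hs
      have hdiv : s / hbar = 0 := Nat.div_eq_of_lt hs'
      simp only [he, hdiv, Nat.zero_mul]
      rw [norm_smul, mul_pow, hnorm₀]
      simp [Real.norm_eq_abs, sq_abs, Nat.Ico_zero_eq_range]
    have hysum : ∑ s ∈ range hbar, ‖y s‖ ^ 2 = 1 := by
      rw [← hw1]
      refine Finset.sum_congr rfl fun s _ => ?_
      simp only [hy]
      rw [norm_smul, mul_pow, hnorm₀]
      simp [Real.norm_eq_abs, sq_abs]
    rw [hesum, hysum, mul_one] at hmain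
    calc Real.sqrt (lamMax hbar) ≤ Real.sqrt (γ ^ 2) := Real.sqrt_le_sqrt hmain
      _ = γ := by rw [Real.sqrt_sq hγ0]
  refine le_antisymm ?_ ?_
  · exact csInf_le ⟨0, fun γ hγ => hγ.1⟩ hmem
  · exact le_csInf ⟨_, hmem⟩ hlb
end

section
/- Let n, m ∈ ℕ with n, m ≥ 1, let A ∈ ℝ^{n×n}, B ∈ ℝ^{n×m}, K ∈ ℝ^{m×n}, and h̄ ∈ ℕ, h̄ ≥ 1; set A_cl := A + BK and λ := λmax(E_{h̄}). Suppose there exist symmetric matrices S ≻ 0, X ≻ 0, Y ⪰ 0 in ℝ^{n×n} such that for all (x, e) ∈ ℝ^n × ℝ^n with (x, e) ≠ 0, writing y := (I − A_cl)x − BKe: (A_cl x + BKe)ᵀ S (A_cl x + BKe) − xᵀ S x + yᵀ(λX + Y)y + 2·yᵀ Y e − eᵀ X e < 0. Then the origin of the aperiodically sampled closed loop is asymptotically stable: for every sampling sequence with intervals h_k ∈ {1,…,h̄} and every x₀, the trajectory satisfies x(s) → 0 as s → ∞, and for every ε > 0 there is δ > 0 such that ‖x₀‖ < δ implies ‖x(s)‖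 < ε for all s and all such sampling sequences. -/
open Matrix Finset

/-- `x` is the closed-loop trajectory of the aperiodically sampled system
`x(s+1) = A x(s) + B K x(t k)` for `s ∈ {t k, …, t (k+1) − 1}`, starting from `x₀`. -/
def IsTraj {n m : ℕ} (A : Matrix (Fin n) (Fin n) ℝ) (B : Matrix (Fin n) (Fin m) ℝ)
    (K : Matrix (Fin m) (Fin n) ℝ) (t : ℕ → ℕ) (x₀ : EuclideanSpace ℝ (Fin n))
    (x : ℕ → EuclideanSpace ℝ (Fin n)) : Prop :=
  x 0 = x₀ ∧ ∀ k s : ℕ, t k ≤ s → s < t (k + 1) →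
    x (s + 1) = A *ᵥ x s + B *ᵥ (K *ᵥ x (t k))

lemma rayleigh {h : ℕ} (v : Fin h → ℝ) :
    v ⬝ᵥ (Emat h *ᵥ v) ≤ lamMax h * (v ⬝ᵥ v) := by
  have hA := Emat_isHermitian h
  set U : Matrix (Fin h) (Fin h) ℝ := (Matrix.IsHermitian.eigenvectorUnitary hA : Matrix (Fin h) (Fin h) ℝ) with hU
  have hspec := hA.spectral_theorem
  set w : Fin h → ℝ := star U *ᵥ v with hw
  have hUU : U * star U = 1 := (Matrix.mem_unitaryGroup_iff).mp (Matrix.IsHermitian.eigenvectorUnitary hA).2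
  have key : v ⬝ᵥ (Emat h *ᵥ v) = ∑ i, hA.eigenvalues i * (w i)^2 := by
    conv_lhs => rw [hspec, Unitary.conjStarAlgAut_apply]
    rw [← mulVec_mulVec, ← mulVec_mulVec]
    rw [dotProduct_mulVec v U]
    have : v ᵥ* U = w := by
      rw [hw, ← mulVec_transpose]
      congr 1
    rw [this, dotProduct_mulVec w, ← hw]
    simp [dotProduct, Matrix.vecMul_diagonal, Function.comp]
    exact Finset.sum_congr rfl fun i _ => by ring
  -- now bound
  have hwv : w ⬝ᵥ w = v ⬝ᵥ v := by
    rw [hw, dotProduct_mulVec, ← mulVec_transpose]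
    have : (star U)ᵀ = U := by
      ext i j; simp [Matrix.star_apply]
    rw [this, mulVec_mulVec, hUU, one_mulVec]
  have hbd : ∀ i, hA.eigenvalues i ≤ lamMax h := fun i =>
    le_ciSup (Set.Finite.bddAbove (Set.finite_range _)) i
  calc v ⬝ᵥ (Emat h *ᵥ v) = ∑ i, hA.eigenvalues i * (w i)^2 := key
    _ ≤ ∑ i, lamMax h * (w i)^2 := by
        apply Finset.sum_le_sum
        intro i _
        exact mul_le_mul_of_nonneg_right (hbd i) (sq_nonneg _)
    _ = lamMax h * (w ⬝ᵥ w) := by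
        simp [dotProduct, Finset.mul_sum, pow_two]
    _ = lamMax h * (v ⬝ᵥ v) := by rw [hwv]

lemma scalar_bound (h : ℕ) (a : ℕ → ℝ) :
    ∑ s ∈ range h, (∑ r ∈ range s, a r)^2 ≤ lamMax h * ∑ s ∈ range h, (a s)^2 := by
  set v : Fin h → ℝ := fun i => a (h - 1 - (i : ℕ)) with hv
  have key : ∑ s ∈ range h, (∑ r ∈ range s, a r)^2 = v ⬝ᵥ (Emat h *ᵥ v) := by
    have expand : v ⬝ᵥ (Emat h *ᵥ v) =
        ∑ i ∈ range h, ∑ j ∈ range h,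
          (min i j : ℝ) * (a (h - 1 - i) * a (h - 1 - j)) := by
      rw [show v ⬝ᵥ (Emat h *ᵥ v) = ∑ i : Fin h, ∑ j : Fin h,
          (min (i:ℕ) (j:ℕ) : ℝ) * (a (h-1-(i:ℕ)) * a (h-1-(j:ℕ))) by
        simp [dotProduct, mulVec, Emat, Finset.mul_sum, hv]
        exact Finset.sum_congr rfl fun i _ => Finset.sum_congr rfl fun j _ => by ring]
      rw [Fin.sum_univ_eq_sum_range (fun i => ∑ j : Fin h, (min i (j:ℕ) : ℝ) * (a (h-1-i) * a (h-1-(j:ℕ))))]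
      exact Finset.sum_congr rfl fun i _ =>
        Fin.sum_univ_eq_sum_range (fun j => (min i j : ℝ) * (a (h-1-i) * a (h-1-j))) h
    rw [expand]
    have reflect : ∑ i ∈ range h, ∑ j ∈ range h,
        (min i j : ℝ) * (a (h - 1 - i) * a (h - 1 - j)) =
        ∑ r ∈ range h, ∑ r' ∈ range h,
          ((h - (max r r' + 1) : ℕ) : ℝ) * (a r * a r') := by
      rw [← Finset.sum_range_reflect]
      refine Finset.sum_congr rfl fun i hi => ?_
      rw [← Finset.sum_range_reflect]
      refine Finset.sum_congr rfl fun j hj => ?_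
      simp only [Finset.mem_range] at hi hj
      rw [show h - 1 - (h - 1 - i) = i from by omega, show h - 1 - (h - 1 - j) = j from by omega,
        ← Nat.cast_min, show min (h - 1 - i) (h - 1 - j) = h - (max i j + 1) from by omega]
    rw [reflect]
    -- now the combinatorial identity
    have step : ∀ s ∈ range h, (∑ r ∈ range s, a r)^2 =
        ∑ r ∈ range h, ∑ r' ∈ range h,
          (if r < s then 1 else (0:ℝ)) * (if r' < s then 1 else 0) * (a r * a r') := by
      intro s hs
      simp only [Finset.mem_range] at hs
      have hsub : ∑ r ∈ range s, a r = ∑ r ∈ range h, (if r < s then a r else 0) := by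
        rw [Finset.sum_ite, Finset.sum_const_zero, add_zero]
        apply Finset.sum_congr
        · ext r; simp; omega
        · intros; rfl
      rw [sq, hsub, Finset.sum_mul_sum]
      refine Finset.sum_congr rfl fun r _ => Finset.sum_congr rfl fun r' _ => ?_
      split_ifs <;> ring
    rw [Finset.sum_congr rfl step, Finset.sum_comm]
    refine Finset.sum_congr rfl fun r hr => ?_
    rw [Finset.sum_comm]
    refine Finset.sum_congr rfl fun r' hr' => ?_
    simp only [Finset.mem_range] at hr hr'
    have : ∀ s ∈ range h, (if r < s then 1 else (0:ℝ)) * (if r' < s then 1 else 0) * (a r * a r')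
        = if max r r' < s then a r * a r' else 0 := by
      intro s _
      rcases lt_or_ge (max r r') s with hc | hc
      · have h1 : r < s := lt_of_le_of_lt (le_max_left _ _) hc
        have h2 : r' < s := lt_of_le_of_lt (le_max_right _ _) hc
        rw [if_pos hc, if_pos h1, if_pos h2]; ring
      · rw [if_neg (not_lt.mpr hc)]
        rcases lt_or_ge r s with h1 | h1
        · have h2 : ¬ r' < s := fun hh => absurd (max_lt h1 hh) (not_lt.mpr hc)
          rw [if_pos h1, if_neg h2]; ring
        · rw [if_neg (not_lt.mpr h1)]; ring
    rw [Finset.sum_congr rfl this, Finset.sum_ite, Finset.sum_const_zero, add_zero,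
      Finset.sum_const]
    have hcard : (Finset.filter (fun s => max r r' < s) (range h)).card = h - (max r r' + 1) := by
      rw [show Finset.filter (fun s => max r r' < s) (range h) = Finset.Ico (max r r' + 1) h by
        ext s; simp [Finset.mem_Ico]; omega]
      rw [Nat.card_Ico]
    rw [hcard, nsmul_eq_mul]
  have keyr : ∑ s ∈ range h, (a s)^2 = v ⬝ᵥ v := by
    rw [show v ⬝ᵥ v = ∑ i : Fin h, (a (h-1-(i:ℕ)))^2 by
      simp [dotProduct, hv, sq]]
    rw [Fin.sum_univ_eq_sum_range (fun i => (a (h-1-i))^2), ← Finset.sum_range_reflect]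
  rw [key, keyr]
  exact rayleigh v

lemma symm_dot {n : ℕ} (Y : Matrix (Fin n) (Fin n) ℝ) (hY : Y.IsHermitian)
    (a b : Fin n → ℝ) : a ⬝ᵥ (Y *ᵥ b) = b ⬝ᵥ (Y *ᵥ a) := by
  rw [dotProduct_mulVec, dotProduct_comm]
  congr 1
  rw [← mulVec_transpose]
  congr 1

lemma quad_eq_sq {n : ℕ} (X : Matrix (Fin n) (Fin n) ℝ) (L : Matrix (Fin n) (Fin n) ℝ)
    (hL : X = Lᴴ * L) (z : Fin n → ℝ) : z ⬝ᵥ (X *ᵥ z) = ∑ i, ((L *ᵥ z) i)^2 := by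
  rw [hL, ← mulVec_mulVec, dotProduct_mulVec]
  have : z ᵥ* Lᴴ = L *ᵥ z := by
    rw [Matrix.conjTranspose_eq_transpose_of_trivial, vecMul_transpose]
  rw [this]
  simp [dotProduct, sq]

lemma iqc {n : ℕ} (hbar : ℕ) (X : Matrix (Fin n) (Fin n) ℝ) (hX : X.PosSemidef)
    (h : ℕ) (hh : h ≤ hbar) (y : ℕ → (Fin n → ℝ)) :
    ∑ s ∈ range h, (∑ r ∈ range s, y r) ⬝ᵥ (X *ᵥ (∑ r ∈ range s, y r))
      ≤ lamMax hbar * ∑ s ∈ range h, (y s) ⬝ᵥ (X *ᵥ (y s)) := by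
  obtain ⟨L, hL⟩ : ∃ L : Matrix (Fin n) (Fin n) ℝ, X = Lᴴ * L := by
    open scoped MatrixOrder in
    exact CStarAlgebra.nonneg_iff_eq_star_mul_self.mp hX.nonneg
  set y' : ℕ → (Fin n → ℝ) := fun r => if r < h then y r else 0 with hy'
  have hsame : ∀ s, s ≤ h → ∑ r ∈ range s, y' r = ∑ r ∈ range s, y r := by
    intro s hs
    refine Finset.sum_congr rfl fun r hr => ?_
    simp only [Finset.mem_range] at hr
    simp [hy', lt_of_lt_of_le hr hs]
  have mulVec_sum : ∀ (s : ℕ) (w : ℕ → Fin n → ℝ), L *ᵥ (∑ r ∈ range s, w r) = ∑ r ∈ range s, L *ᵥ (w r) :=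
    fun s w => map_sum L.mulVecLin w (range s)
  calc ∑ s ∈ range h, (∑ r ∈ range s, y r) ⬝ᵥ (X *ᵥ (∑ r ∈ range s, y r))
      ≤ ∑ s ∈ range hbar, (∑ r ∈ range s, y' r) ⬝ᵥ (X *ᵥ (∑ r ∈ range s, y' r)) := by
        rw [show ∑ s ∈ range h, (∑ r ∈ range s, y r) ⬝ᵥ (X *ᵥ (∑ r ∈ range s, y r))
            = ∑ s ∈ range h, (∑ r ∈ range s, y' r) ⬝ᵥ (X *ᵥ (∑ r ∈ range s, y' r)) from
          Finset.sum_congr rfl fun s hs => by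
            rw [hsame s (le_of_lt (Finset.mem_range.mp hs))]]
        exact Finset.sum_le_sum_of_subset_of_nonneg (Finset.range_mono hh)
          (fun s _ _ => by
            have := hX.dotProduct_mulVec_nonneg (∑ r ∈ range s, y' r)
            rwa [star_trivial] at this)
    _ = ∑ i, ∑ s ∈ range hbar, (∑ r ∈ range s, ((L *ᵥ y' r) i))^2 := by
        rw [Finset.sum_congr rfl fun s _ => quad_eq_sq X L hL _, Finset.sum_comm]
        refine Finset.sum_congr rfl fun i _ => Finset.sum_congr rfl fun s _ => ?_
        rw [mulVec_sum s y']
        simp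
    _ ≤ ∑ i, lamMax hbar * ∑ s ∈ range hbar, ((L *ᵥ y' s) i)^2 := by
        exact Finset.sum_le_sum fun i _ => scalar_bound hbar (fun r => (L *ᵥ y' r) i)
    _ = lamMax hbar * ∑ s ∈ range hbar, (y' s) ⬝ᵥ (X *ᵥ (y' s)) := by
        rw [← Finset.mul_sum]
        congr 1
        rw [Finset.sum_comm]
        exact Finset.sum_congr rfl fun s _ => (quad_eq_sq X L hL _).symm
    _ = lamMax hbar * ∑ s ∈ range h, (y s) ⬝ᵥ (X *ᵥ (y s)) := by
        congr 1
        rw [← Finset.sum_subset (Finset.range_mono hh)]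
        · refine Finset.sum_congr rfl fun s hs => ?_
          simp only [Finset.mem_range] at hs
          simp [hy', hs]
        · intro s _ hs
          simp only [Finset.mem_range] at hs
          simp [hy', hs]

lemma tele {n : ℕ} (Y : Matrix (Fin n) (Fin n) ℝ) (hY : Y.PosSemidef) (h : ℕ)
    (y : ℕ → Fin n → ℝ) :
    0 ≤ ∑ s ∈ range h, ((y s) ⬝ᵥ (Y *ᵥ (y s)) +
      2 * ((y s) ⬝ᵥ (Y *ᵥ (∑ r ∈ range s, y r)))) := by
  have key : ∀ N : ℕ, ∑ s ∈ range N, ((y s) ⬝ᵥ (Y *ᵥ (y s)) +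
      2 * ((y s) ⬝ᵥ (Y *ᵥ (∑ r ∈ range s, y r))))
      = (∑ r ∈ range N, y r) ⬝ᵥ (Y *ᵥ (∑ r ∈ range N, y r)) := by
    intro N
    induction N with
    | zero => simp
    | succ N ih =>
      rw [Finset.sum_range_succ, ih, Finset.sum_range_succ]
      have hsymm := symm_dot Y hY.1 (y N) (∑ r ∈ range N, y r)
      rw [add_dotProduct, mulVec_add, dotProduct_add, dotProduct_add]
      rw [hsymm]
      ring
  rw [key]
  have := hY.dotProduct_mulVec_nonneg (∑ r ∈ range h, y r)
  rwa [star_trivial] at this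

/-- transition matrices within a sampling interval -/
def Psi {n : ℕ} (A BK : Matrix (Fin n) (Fin n) ℝ) : ℕ → Matrix (Fin n) (Fin n) ℝ
  | 0 => 1
  | (j+1) => A * Psi A BK j + BK

lemma decrease {n m : ℕ}
    (A : Matrix (Fin n) (Fin n) ℝ) (B : Matrix (Fin n) (Fin m) ℝ)
    (K : Matrix (Fin m) (Fin n) ℝ) (hbar : ℕ)
    (S X Y : Matrix (Fin n) (Fin n) ℝ)
    (hX : X.PosSemidef) (hY : Y.PosSemidef)
    (hLMI : ∀ x e : Fin n → ℝ, ¬(x = 0 ∧ e = 0) →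
      ((A + B * K) *ᵥ x + B *ᵥ (K *ᵥ e)) ⬝ᵥ (S *ᵥ ((A + B * K) *ᵥ x + B *ᵥ (K *ᵥ e)))
        - x ⬝ᵥ (S *ᵥ x)
        + (x - (A + B * K) *ᵥ x - B *ᵥ (K *ᵥ e)) ⬝ᵥ
            ((lamMax hbar • X + Y) *ᵥ (x - (A + B * K) *ᵥ x - B *ᵥ (K *ᵥ e)))
        + 2 * ((x - (A + B * K) *ᵥ x - B *ᵥ (K *ᵥ e)) ⬝ᵥ (Y *ᵥ e))
        - e ⬝ᵥ (X *ᵥ e) < 0)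
    (xhat : Fin n → ℝ) (hxhat : xhat ≠ 0) (h : ℕ) (h1 : 1 ≤ h) (h2 : h ≤ hbar) :
    (Psi A (B*K) h *ᵥ xhat) ⬝ᵥ (S *ᵥ (Psi A (B*K) h *ᵥ xhat)) < xhat ⬝ᵥ (S *ᵥ xhat) := by
  set ξ : ℕ → (Fin n → ℝ) := fun j => Psi A (B*K) j *ᵥ xhat with hξ
  set e : ℕ → (Fin n → ℝ) := fun j => xhat - ξ j with he
  set y : ℕ → (Fin n → ℝ) := fun j => ξ j - ξ (j+1) with hy
  have hξ0 : ξ 0 = xhat := by simp [hξ, Psi]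
  have fact1 : ∀ j, ξ (j+1) = (A + B * K) *ᵥ ξ j + B *ᵥ (K *ᵥ e j) := by
    intro j
    show Psi A (B*K) (j+1) *ᵥ xhat = _
    rw [show Psi A (B*K) (j+1) = A * Psi A (B*K) j + B*K from rfl]
    simp only [he, hξ, add_mulVec, ← mulVec_mulVec, mulVec_sub]
    abel
  have fact2 : ∀ j, y j = ξ j - (A + B * K) *ᵥ ξ j - B *ᵥ (K *ᵥ e j) := by
    intro j
    rw [hy]
    simp only
    rw [fact1 j]
    abel
  have fact3 : ∀ s, e s = ∑ r ∈ range s, y r := by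
    intro s
    induction s with
    | zero => simp [he, hξ0]
    | succ s ih =>
      rw [Finset.sum_range_succ, ← ih]
      simp only [he, hy]
      abel
  set f : ℕ → ℝ := fun j => ξ j ⬝ᵥ (S *ᵥ ξ j) with hf
  set T : ℕ → ℝ := fun s => f (s+1) - f s
      + y s ⬝ᵥ ((lamMax hbar • X + Y) *ᵥ y s)
      + 2 * (y s ⬝ᵥ (Y *ᵥ e s)) - e s ⬝ᵥ (X *ᵥ e s) with hT
  have hTle : ∀ s, T s ≤ 0 := by
    intro s
    by_cases hz : ξ s = 0 ∧ e s = 0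
    · have hz1 : ξ (s+1) = 0 := by rw [fact1 s, hz.1, hz.2]; simp
      have hz2 : y s = 0 := by rw [hy]; simp only; rw [hz.1, hz1]; simp
      simp [hT, hf, hz.1, hz.2, hz1, hz2]
    · have := hLMI (ξ s) (e s) hz
      rw [← fact1 s, ← fact2 s] at this
      exact le_of_lt this
  have hT0 : T 0 < 0 := by
    have hz : ¬(ξ 0 = 0 ∧ e 0 = 0) := fun ⟨hc, _⟩ => hxhat (hξ0 ▸ hc)
    have := hLMI (ξ 0) (e 0) hz
    rw [← fact1 0, ← fact2 0] at this
    exact this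
  have hsum : ∑ s ∈ range h, T s < 0 := by
    have := Finset.sum_lt_sum (f := T) (g := fun _ => (0:ℝ))
      (fun s _ => hTle s) ⟨0, Finset.mem_range.mpr h1, hT0⟩
    simpa using this
  have expandT : ∀ s : ℕ, T s = (f (s+1) - f s)
      + (lamMax hbar * (y s ⬝ᵥ (X *ᵥ y s)) - e s ⬝ᵥ (X *ᵥ e s))
      + ((y s ⬝ᵥ (Y *ᵥ y s)) + 2 * (y s ⬝ᵥ (Y *ᵥ e s))) := by
    intro s
    rw [hT]
    simp only [add_mulVec, smul_mulVec, dotProduct_add, dotProduct_smul, smul_eq_mul]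
    ring
  have hdecomp : ∑ s ∈ range h, T s = (f h - f 0)
      + (lamMax hbar * ∑ s ∈ range h, (y s ⬝ᵥ (X *ᵥ y s)) - ∑ s ∈ range h, (e s ⬝ᵥ (X *ᵥ e s)))
      + ∑ s ∈ range h, ((y s ⬝ᵥ (Y *ᵥ y s)) + 2 * (y s ⬝ᵥ (Y *ᵥ e s))) := by
    rw [← Finset.sum_range_sub f h, Finset.mul_sum, ← Finset.sum_sub_distrib,
      ← Finset.sum_add_distrib, ← Finset.sum_add_distrib]
    exact Finset.sum_congr rfl fun s _ => expandT s
  have hiqc : ∑ s ∈ range h, (e s ⬝ᵥ (X *ᵥ e s))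
      ≤ lamMax hbar * ∑ s ∈ range h, (y s ⬝ᵥ (X *ᵥ y s)) := by
    have := iqc hbar X hX h h2 y
    rw [Finset.sum_congr rfl (fun s _ => by rw [fact3 s])]
    exact this
  have htele : 0 ≤ ∑ s ∈ range h, ((y s ⬝ᵥ (Y *ᵥ y s)) + 2 * (y s ⬝ᵥ (Y *ᵥ e s))) := by
    have := tele Y hY h y
    rw [Finset.sum_congr rfl (fun s _ => by rw [fact3 s])]
    exact this
  have : f h - f 0 < 0 := by
    rw [hdecomp] at hsum
    linarith
  have hfh : f h = (Psi A (B*K) h *ᵥ xhat) ⬝ᵥ (S *ᵥ (Psi A (B*K) h *ᵥ xhat)) := rfl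
  have hf0 : f 0 = xhat ⬝ᵥ (S *ᵥ xhat) := by rw [hf]; simp only; rw [hξ0]
  rw [← hfh, ← hf0]
  linarith

lemma cont_quad {n : ℕ} (S : Matrix (Fin n) (Fin n) ℝ) :
    Continuous fun x : Fin n → ℝ => x ⬝ᵥ (S *ᵥ x) := by
  simp only [dotProduct, mulVec]
  exact continuous_finset_sum _ fun i _ => (continuous_apply i).mul
    (continuous_finset_sum _ fun j _ => continuous_const.mul (continuous_apply j))

lemma cont_mulVec {n : ℕ} (M : Matrix (Fin n) (Fin n) ℝ) :
    Continuous fun x : Fin n → ℝ => M *ᵥ x := by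
  apply continuous_pi
  intro i
  simp only [mulVec, dotProduct]
  exact continuous_finset_sum _ fun j _ => continuous_const.mul (continuous_apply j)

lemma quad_hom {n : ℕ} (S : Matrix (Fin n) (Fin n) ℝ) (c : ℝ) (u : Fin n → ℝ) :
    (c • u) ⬝ᵥ (S *ᵥ (c • u)) = c^2 * (u ⬝ᵥ (S *ᵥ u)) := by
  rw [mulVec_smul, smul_dotProduct, dotProduct_smul, smul_eq_mul, smul_eq_mul]
  ring

lemma contract_one {n : ℕ} (hn : 1 ≤ n) (S M : Matrix (Fin n) (Fin n) ℝ) (hS : S.PosDef)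
    (hdec : ∀ x : Fin n → ℝ, x ≠ 0 → (M *ᵥ x) ⬝ᵥ (S *ᵥ (M *ᵥ x)) < x ⬝ᵥ (S *ᵥ x)) :
    ∃ ρ : ℝ, 0 ≤ ρ ∧ ρ < 1 ∧
      ∀ x : Fin n → ℝ, (M *ᵥ x) ⬝ᵥ (S *ᵥ (M *ᵥ x)) ≤ ρ * (x ⬝ᵥ (S *ᵥ x)) := by
  set V : (Fin n → ℝ) → ℝ := fun x => x ⬝ᵥ (S *ᵥ x) with hV
  set φ : (Fin n → ℝ) → ℝ := fun x => (M *ᵥ x) ⬝ᵥ (S *ᵥ (M *ᵥ x)) with hφ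
  have contV : Continuous V := cont_quad S
  have contφ : Continuous φ := (cont_quad S).comp (cont_mulVec M)
  set sph := Metric.sphere (0 : Fin n → ℝ) 1 with hsph
  have hcomp : IsCompact sph := isCompact_sphere _ _
  have hnz : ∀ u ∈ sph, u ≠ 0 := by
    intro u hu
    rw [hsph, mem_sphere_zero_iff_norm] at hu
    exact fun hc => by simp [hc] at hu
  have hVpos : ∀ u ∈ sph, 0 < V u := fun u hu => by
    have := hS.dotProduct_mulVec_pos (hnz u hu)
    rwa [star_trivial] at this
  have hne : sph.Nonempty := by
    set v0 : Fin n → ℝ := Pi.single ⟨0, hn⟩ 1 with hv0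
    have hv : v0 ≠ 0 := by
      intro hc
      have := congrFun hc ⟨0, hn⟩
      simp [hv0] at this
    refine ⟨‖v0‖⁻¹ • v0, ?_⟩
    rw [hsph, mem_sphere_zero_iff_norm, norm_smul, norm_inv, norm_norm,
      inv_mul_cancel₀ (norm_ne_zero_iff.mpr hv)]
  obtain ⟨z, hzs, hmax⟩ := hcomp.exists_isMaxOn hne
    ((contφ.continuousOn).div (contV.continuousOn) (fun u hu => ne_of_gt (hVpos u hu)))
  set ρ : ℝ := max (φ z / V z) 0 with hρ
  have hρ0 : 0 ≤ ρ := le_max_right _ _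
  have hρ1 : ρ < 1 := by
    apply max_lt _ zero_lt_one
    rw [div_lt_one (hVpos z hzs)]
    exact hdec z (hnz z hzs)
  refine ⟨ρ, hρ0, hρ1, ?_⟩
  have hsphere_bound : ∀ u ∈ sph, φ u ≤ ρ * V u := by
    intro u hu
    have h1 : φ u / V u ≤ φ z / V z := hmax hu
    have := (div_le_iff₀ (hVpos u hu)).mp (h1.trans (le_max_left _ 0))
    linarith [this]
  intro x
  show φ x ≤ ρ * V x
  by_cases hx : x = 0
  · rw [hx]
    have : φ 0 = 0 := by simp [hφ]
    have h2 : V 0 = 0 := by simp [hV]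
    rw [this, h2, mul_zero]
  · have hnorm : ‖x‖ ≠ 0 := norm_ne_zero_iff.mpr hx
    set u : Fin n → ℝ := ‖x‖⁻¹ • x with hu
    have hus : u ∈ sph := by
      rw [hsph, mem_sphere_zero_iff_norm, hu, norm_smul, norm_inv, norm_norm,
        inv_mul_cancel₀ hnorm]
    have hxu : x = ‖x‖ • u := by rw [hu, smul_inv_smul₀ hnorm]
    have hVx : V x = ‖x‖^2 * V u := by
      nth_rewrite 1 [hxu]
      exact quad_hom S _ u
    have hφx : φ x = ‖x‖^2 * φ u := by
      nth_rewrite 1 [hxu]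
      show (M *ᵥ (‖x‖ • u)) ⬝ᵥ (S *ᵥ (M *ᵥ (‖x‖ • u))) = _
      rw [mulVec_smul]
      exact quad_hom S _ (M *ᵥ u)
    rw [hφx, hVx]
    calc ‖x‖^2 * φ u ≤ ‖x‖^2 * (ρ * V u) :=
          mul_le_mul_of_nonneg_left (hsphere_bound u hus) (sq_nonneg _)
      _ = ρ * (‖x‖^2 * V u) := by ring

/-- Model-based stability criterion: if the IQC-based LMI holds for some `S ≻ 0`,
`X ≻ 0`, `Y ⪰ 0`, then the aperiodically sampled closed loop is asymptotically stable
for all sampling patterns with intervals in `{1,…,h̄}`. -/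
theorem model_based_stability
    (n m : ℕ) (hn : 1 ≤ n) (hm : 1 ≤ m)
    (A : Matrix (Fin n) (Fin n) ℝ) (B : Matrix (Fin n) (Fin m) ℝ)
    (K : Matrix (Fin m) (Fin n) ℝ) (hbar : ℕ) (hhbar : 1 ≤ hbar)
    (S X Y : Matrix (Fin n) (Fin n) ℝ)
    (hS : S.PosDef) (hX : X.PosDef) (hY : Y.PosSemidef)
    (hLMI : ∀ x e : Fin n → ℝ, ¬(x = 0 ∧ e = 0) →
      ((A + B * K) *ᵥ x + B *ᵥ (K *ᵥ e)) ⬝ᵥ (S *ᵥ ((A + B * K) *ᵥ x + B *ᵥ (K *ᵥ e)))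
        - x ⬝ᵥ (S *ᵥ x)
        + (x - (A + B * K) *ᵥ x - B *ᵥ (K *ᵥ e)) ⬝ᵥ
            ((lamMax hbar • X + Y) *ᵥ (x - (A + B * K) *ᵥ x - B *ᵥ (K *ᵥ e)))
        + 2 * ((x - (A + B * K) *ᵥ x - B *ᵥ (K *ᵥ e)) ⬝ᵥ (Y *ᵥ e))
        - e ⬝ᵥ (X *ᵥ e) < 0) :
    (∀ t : ℕ → ℕ, StrictMono t → t 0 = 0 → (∀ k : ℕ, t (k + 1) - t k ≤ hbar) →
      ∀ (x₀ : EuclideanSpace ℝ (Fin n)) (x : ℕ → EuclideanSpace ℝ (Fin n)),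
        IsTraj A B K t x₀ x → Filter.Tendsto x Filter.atTop (nhds 0)) ∧
    (∀ ε : ℝ, 0 < ε → ∃ δ : ℝ, 0 < δ ∧
      ∀ t : ℕ → ℕ, StrictMono t → t 0 = 0 → (∀ k : ℕ, t (k + 1) - t k ≤ hbar) →
        ∀ (x₀ : EuclideanSpace ℝ (Fin n)) (x : ℕ → EuclideanSpace ℝ (Fin n)),
          IsTraj A B K t x₀ x → ‖x₀‖ < δ → ∀ s : ℕ, ‖x s‖ < ε) := by
  set P : ℕ → Matrix (Fin n) (Fin n) ℝ := Psi A (B*K) with hP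
  set V : (Fin n → ℝ) → ℝ := fun z => z ⬝ᵥ (S *ᵥ z) with hVdef
  -- contraction factor
  have hdec : ∀ h, 1 ≤ h → h ≤ hbar → ∀ x : Fin n → ℝ, x ≠ 0 → V (P h *ᵥ x) < V x :=
    fun h h1 h2 x hx => decrease A B K hbar S X Y hX.posSemidef hY hLMI x hx h h1 h2
  have hcontr : ∀ h : ℕ, ∃ ρ : ℝ, 0 ≤ ρ ∧ ρ < 1 ∧ (1 ≤ h → h ≤ hbar →
      ∀ x : Fin n → ℝ, V (P h *ᵥ x) ≤ ρ * V x) := by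
    intro h
    by_cases hc : 1 ≤ h ∧ h ≤ hbar
    · obtain ⟨ρ, a, b, c⟩ := contract_one hn S (P h) hS (fun x hx => hdec h hc.1 hc.2 x hx)
      exact ⟨ρ, a, b, fun _ _ => c⟩
    · exact ⟨0, le_refl _, zero_lt_one, fun h1 h2 => absurd ⟨h1, h2⟩ hc⟩
  choose R hR0 hR1 hRb using hcontr
  have h1mem : (1:ℕ) ∈ Finset.Icc 1 hbar := Finset.mem_Icc.mpr ⟨le_refl _, hhbar⟩
  set ρ : ℝ := (Finset.Icc 1 hbar).sup' ⟨1, h1mem⟩ R with hρdef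
  have hρ0 : 0 ≤ ρ := le_trans (hR0 1) (Finset.le_sup' R h1mem)
  have hρ1 : ρ < 1 := (Finset.sup'_lt_iff _).mpr fun h _ => hR1 h
  have hρb : ∀ h, 1 ≤ h → h ≤ hbar → ∀ x : Fin n → ℝ, V (P h *ᵥ x) ≤ ρ * V x := by
    intro h h1 h2 x
    refine (hRb h h1 h2 x).trans ?_
    exact mul_le_mul_of_nonneg_right (Finset.le_sup' R (Finset.mem_Icc.mpr ⟨h1, h2⟩))
      (by have := hS.posSemidef.dotProduct_mulVec_nonneg x; rwa [star_trivial] at this)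
  -- bounds on V over the Euclidean sphere
  have contVE : Continuous fun z : EuclideanSpace ℝ (Fin n) => V z :=
    (cont_quad S).comp (EuclideanSpace.equiv (Fin n) ℝ).toHomeomorph.continuous
  set sphE := Metric.sphere (0 : EuclideanSpace ℝ (Fin n)) 1 with hsphE
  have hcompE : IsCompact sphE := isCompact_sphere _ _
  have hneE : sphE.Nonempty := by
    set v0 : EuclideanSpace ℝ (Fin n) := WithLp.toLp 2 (Pi.single ⟨0, hn⟩ 1 : Fin n → ℝ) with hv0
    have hv : v0 ≠ 0 := by
      intro hc
      have := congrArg (fun v : EuclideanSpace ℝ (Fin n) => v ⟨0, hn⟩) hc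
      simp [hv0] at this
    refine ⟨‖v0‖⁻¹ • v0, ?_⟩
    rw [hsphE, mem_sphere_zero_iff_norm, norm_smul, norm_inv, norm_norm,
      inv_mul_cancel₀ (norm_ne_zero_iff.mpr hv)]
  have hnzE : ∀ u ∈ sphE, u ≠ 0 := by
    intro u hu
    rw [hsphE, mem_sphere_zero_iff_norm] at hu
    exact fun hc => by simp [hc] at hu
  obtain ⟨z1, hz1, hmin⟩ := hcompE.exists_isMinOn hneE contVE.continuousOn
  obtain ⟨z2, hz2, hmax⟩ := hcompE.exists_isMaxOn hneE contVE.continuousOn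
  set c1 : ℝ := V z1 with hc1def
  set c2 : ℝ := V z2 with hc2def
  have hz1ne : (z1 : Fin n → ℝ) ≠ 0 := fun hc => hnzE z1 hz1 (by simpa using hc)
  have hc1 : 0 < c1 := by
    have := hS.dotProduct_mulVec_pos hz1ne
    rwa [star_trivial] at this
  have hc2 : 0 ≤ c2 := le_trans (le_of_lt hc1) (hmin hz2)
  have hVzero : V (0 : EuclideanSpace ℝ (Fin n)) = 0 := by
    show (0 : Fin n → ℝ) ⬝ᵥ (S *ᵥ (0 : Fin n → ℝ)) = 0
    simp
  have hVscale : ∀ z : EuclideanSpace ℝ (Fin n), z ≠ 0 →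
      c1 * ‖z‖^2 ≤ V z ∧ V z ≤ c2 * ‖z‖^2 := by
    intro z hz
    have hnorm : ‖z‖ ≠ 0 := norm_ne_zero_iff.mpr hz
    set u : EuclideanSpace ℝ (Fin n) := ‖z‖⁻¹ • z with hu
    have hus : u ∈ sphE := by
      rw [hsphE, mem_sphere_zero_iff_norm, hu, norm_smul, norm_inv, norm_norm,
        inv_mul_cancel₀ hnorm]
    have hxu : z = ‖z‖ • u := by rw [hu, smul_inv_smul₀ hnorm]
    have hVz : V z = ‖z‖^2 * V u := by
      nth_rewrite 1 [hxu]
      exact quad_hom S _ u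
    have hb1 : c1 ≤ V u := hmin hus
    have hb2 : V u ≤ c2 := hmax hus
    constructor
    · rw [hVz]; nlinarith [sq_nonneg ‖z‖]
    · rw [hVz]; nlinarith [sq_nonneg ‖z‖]
  have hVlb : ∀ z : EuclideanSpace ℝ (Fin n), c1 * ‖z‖^2 ≤ V z := by
    intro z
    by_cases hz : z = 0
    · rw [hz, hVzero]; simp
    · exact (hVscale z hz).1
  have hVub : ∀ z : EuclideanSpace ℝ (Fin n), V z ≤ c2 * ‖z‖^2 := by
    intro z
    by_cases hz : z = 0
    · rw [hz, hVzero]; simp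
    · exact (hVscale z hz).2
  -- operator norm bound for intra-sample growth
  set Lmap : Matrix (Fin n) (Fin n) ℝ → (EuclideanSpace ℝ (Fin n) →L[ℝ] EuclideanSpace ℝ (Fin n)) :=
    fun M => LinearMap.toContinuousLinearMap (Matrix.toEuclideanLin M) with hLmap
  have hLapp : ∀ (M : Matrix (Fin n) (Fin n) ℝ) (z : EuclideanSpace ℝ (Fin n)),
      Lmap M z = M *ᵥ z := fun M z => rfl
  have h0mem : (0:ℕ) ∈ Finset.range (hbar+1) := Finset.mem_range.mpr (Nat.succ_pos _)
  set C : ℝ := (Finset.range (hbar+1)).sup' ⟨0, h0mem⟩ (fun j => ‖Lmap (P j)‖) with hCdef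
  have hC0 : 0 ≤ C := le_trans (norm_nonneg (Lmap (P 0))) (Finset.le_sup' (fun j => ‖Lmap (P j)‖) h0mem)
  set D : ℝ := C^2 * c2 / c1 with hDdef
  have hD0 : 0 ≤ D := by positivity
  -- the core estimate
  have core : ∀ (t : ℕ → ℕ), StrictMono t → t 0 = 0 → (∀ k : ℕ, t (k + 1) - t k ≤ hbar) →
      ∀ (x₀ : EuclideanSpace ℝ (Fin n)) (x : ℕ → EuclideanSpace ℝ (Fin n)), IsTraj A B K t x₀ x →
      ∀ s : ℕ, ∃ k : ℕ, s < (k+1) * hbar ∧ ‖x s‖^2 ≤ D * ρ^k * ‖x₀‖^2 := by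
    intro t ht ht0 hint x₀ x htraj s
    have hstep : ∀ k j, t k + j ≤ t (k+1) → x (t k + j) = P j *ᵥ (x (t k)) := by
      intro k j
      induction j with
      | zero =>
        intro _
        rw [Nat.add_zero]
        show x (t k) = Psi A (B*K) 0 *ᵥ x (t k)
        rw [show Psi A (B*K) 0 = 1 from rfl, one_mulVec]
      | succ j ih =>
        intro hle
        have hlt : t k + j < t (k+1) := by omega
        have h1 := htraj.2 k (t k + j) (by omega) hlt
        rw [show t k + (j+1) = (t k + j) + 1 from rfl, h1, ih (by omega)]
        show A *ᵥ (P j *ᵥ x (t k)) + B *ᵥ (K *ᵥ x (t k)) = P (j+1) *ᵥ x (t k)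
        rw [show P (j+1) = A * P j + B*K from by rw [hP]; rfl, add_mulVec,
          ← mulVec_mulVec, ← mulVec_mulVec]
    have hmono : ∀ k, t k < t (k+1) := fun k => ht (Nat.lt_succ_self k)
    have hsampled : ∀ k, V (x (t (k+1))) ≤ ρ * V (x (t k)) := by
      intro k
      have h1 : t k + (t (k+1) - t k) = t (k+1) := by have := hmono k; omega
      have h2 := hstep k (t (k+1) - t k) (by omega)
      rw [h1] at h2
      rw [h2]
      exact hρb _ (by have := hmono k; omega) (hint k) _
    have hVk : ∀ k, V (x (t k)) ≤ ρ^k * V (x 0) := by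
      intro k
      induction k with
      | zero => rw [ht0, pow_zero, one_mul]
      | succ k ih =>
        calc V (x (t (k+1))) ≤ ρ * V (x (t k)) := hsampled k
          _ ≤ ρ * (ρ^k * V (x 0)) := mul_le_mul_of_nonneg_left ih hρ0
          _ = ρ^(k+1) * V (x 0) := by ring
    have hloc : ∃ k, t k ≤ s ∧ s < t (k+1) := by
      induction s with
      | zero => exact ⟨0, by omega, by have := hmono 0; omega⟩
      | succ s ih =>
        obtain ⟨k, hk1, hk2⟩ := ih
        by_cases hc : s + 1 < t (k+1)
        · exact ⟨k, by omega, hc⟩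
        · exact ⟨k+1, by omega, by have := hmono (k+1); omega⟩
    obtain ⟨k, hk1, hk2⟩ := hloc
    have hub : ∀ j, t j ≤ j * hbar := by
      intro j
      induction j with
      | zero => omega
      | succ j ih =>
        have h1 := hint j
        have h2 := hmono j
        have h3 : (j+1) * hbar = j * hbar + hbar := by ring
        omega
    refine ⟨k, lt_of_lt_of_le hk2 (hub (k+1)), ?_⟩
    set j := s - t k with hjdef
    have hsj : t k + j = s := by omega
    have hj : j ≤ hbar := by have := hint k; omega
    have hxs : x s = Lmap (P j) (x (t k)) := by
      have hx1 : x (t k + j) = P j *ᵥ x (t k) := hstep k j (by omega)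
      rw [hsj] at hx1
      rw [← hLapp] at hx1
      exact WithLp.ofLp_injective _ hx1
    have hns : ‖x s‖ ≤ C * ‖x (t k)‖ := by
      rw [hxs]
      calc ‖Lmap (P j) (x (t k))‖ ≤ ‖Lmap (P j)‖ * ‖x (t k)‖ := (Lmap (P j)).le_opNorm _
        _ ≤ C * ‖x (t k)‖ := by
            have hmem : j ∈ Finset.range (hbar+1) := Finset.mem_range.mpr (by omega)
            exact mul_le_mul_of_nonneg_right
              (Finset.le_sup' (fun j => ‖Lmap (P j)‖) hmem) (norm_nonneg _)
    have hx0 : x 0 = x₀ := htraj.1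
    have e1 : c1 * ‖x (t k)‖^2 ≤ ρ^k * (c2 * ‖x₀‖^2) := by
      calc c1 * ‖x (t k)‖^2 ≤ V (x (t k)) := hVlb _
        _ ≤ ρ^k * V (x 0) := hVk k
        _ ≤ ρ^k * (c2 * ‖x₀‖^2) := by
            rw [hx0]
            exact mul_le_mul_of_nonneg_left (hVub x₀) (pow_nonneg hρ0 k)
    have e2 : ‖x s‖^2 ≤ C^2 * ‖x (t k)‖^2 := by
      have := pow_le_pow_left₀ (norm_nonneg (x s)) hns 2
      calc ‖x s‖^2 ≤ (C * ‖x (t k)‖)^2 := this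
        _ = C^2 * ‖x (t k)‖^2 := by ring
    have e3 : ‖x (t k)‖^2 ≤ ρ^k * (c2 * ‖x₀‖^2) / c1 := by
      rw [le_div_iff₀ hc1]
      linarith [e1]
    calc ‖x s‖^2 ≤ C^2 * (ρ^k * (c2 * ‖x₀‖^2) / c1) :=
          e2.trans (mul_le_mul_of_nonneg_left e3 (sq_nonneg C))
      _ = D * ρ^k * ‖x₀‖^2 := by rw [hDdef]; field_simp
  constructor
  · -- convergence
    intro t ht ht0 hint x₀ x htraj
    rw [Metric.tendsto_atTop]
    intro ε hε
    set Q : ℝ := D * ‖x₀‖^2 with hQdef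
    have hQ0 : 0 ≤ Q := mul_nonneg hD0 (sq_nonneg _)
    have htend : Filter.Tendsto (fun k : ℕ => Q * ρ^k) Filter.atTop (nhds 0) := by
      have := tendsto_pow_atTop_nhds_zero_of_lt_one hρ0 hρ1
      simpa using this.const_mul Q
    have heps : 0 < ε^2 := by positivity
    obtain ⟨Kb, hKb⟩ := (Metric.tendsto_atTop.mp htend) (ε^2) heps
    refine ⟨(Kb+1) * hbar, fun s hs => ?_⟩
    obtain ⟨k, hk, hbound⟩ := core t ht ht0 hint x₀ x htraj s
    have hkge : Kb ≤ k := by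
      by_contra hcon
      push_neg at hcon
      have : (k+1) * hbar ≤ (Kb+1) * hbar := Nat.mul_le_mul_right _ (by omega)
      omega
    have hlt : Q * ρ^k < ε^2 := by
      have := hKb k hkge
      rw [Real.dist_eq, sub_zero, abs_of_nonneg (mul_nonneg hQ0 (pow_nonneg hρ0 _))] at this
      exact this
    have : ‖x s‖^2 < ε^2 := by
      calc ‖x s‖^2 ≤ D * ρ^k * ‖x₀‖^2 := hbound
        _ = Q * ρ^k := by rw [hQdef]; ring
        _ < ε^2 := hlt
    rw [dist_zero_right]
    exact lt_of_pow_lt_pow_left₀ 2 (le_of_lt hε) this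
  · -- stability
    intro ε hε
    set D' : ℝ := max D 1 with hD'def
    have hD'1 : 1 ≤ D' := le_max_right _ _
    have hD'0 : 0 < D' := lt_of_lt_of_le zero_lt_one hD'1
    have hsq : 0 < Real.sqrt D' := Real.sqrt_pos.mpr hD'0
    refine ⟨ε / Real.sqrt D', by positivity, ?_⟩
    intro t ht ht0 hint x₀ x htraj hx0 s
    obtain ⟨k, _, hbound⟩ := core t ht ht0 hint x₀ x htraj s
    have h1 : D * ρ^k ≤ D' := by
      calc D * ρ^k ≤ D * 1 := mul_le_mul_of_nonneg_left (pow_le_one₀ hρ0 (le_of_lt hρ1)) hD0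
        _ = D := mul_one D
        _ ≤ D' := le_max_left _ _
    have h2 : ‖x₀‖^2 < (ε / Real.sqrt D')^2 := by
      apply pow_lt_pow_left₀ hx0 (norm_nonneg _)
      omega
    have h3 : (ε / Real.sqrt D')^2 = ε^2 / D' := by
      rw [div_pow, Real.sq_sqrt (le_of_lt hD'0)]
    have : ‖x s‖^2 < ε^2 := by
      calc ‖x s‖^2 ≤ D * ρ^k * ‖x₀‖^2 := hbound
        _ ≤ D' * ‖x₀‖^2 := mul_le_mul_of_nonneg_right h1 (sq_nonneg _)
        _ < D' * (ε^2 / D') := by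
            rw [← h3]
            exact mul_lt_mul_of_pos_left h2 hD'0
        _ = ε^2 := by field_simp
    exact lt_of_pow_lt_pow_left₀ 2 (le_of_lt hε) this
end
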